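/- Fix an odd prime p and ξ = e^{2πi/p²}. The set 𝒯 of all 2p×2p 'tadpole matrices' A = diag(D C^k, 1, ξ^{k+a_1 p}, ξ^{2k+a_2 p}, …, ξ^{(p−1)k+a_{p−1}p}), where D ranges over unitary diagonal p×p matrices with det D = 1, k ∈ {0,…,p−1}, and a_j ∈ {0,…,p−1}, is closed under matrix multiplication; in fact it is a group under multiplication. -/

import Mathlib

open Matrix

/-- The `p × p` cyclic permutation matrix. -/
def cycleMatrix (p : ℕ) : Matrix (Fin p) (Fin p) ℂ :=
  Matrix.of fun i j => if (j : ℕ) = ((i : ℕ) + 1) % p then 1 else 0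

/-- The fixed primitive `p²`-th root of unity `ξ = e^{2πi/p²}`. -/
noncomputable def xi (p : ℕ) : ℂ := Complex.exp (2 * Real.pi * Complex.I / (p ^ 2))

/-- The tadpole matrix with head `D C^k` (where `D = diagonal d`) and tail
`diag(ξ^{0·k + a_0 p}, ξ^{1·k + a_1 p}, …, ξ^{(p-1)k + a_{p-1} p})`.
We index the `2p × 2p` matrix by `Fin p ⊕ Fin p`. -/
noncomputable def tadpole (p : ℕ) (d : Fin p → ℂ) (k : ℕ) (a : Fin p → ℕ) :
    Matrix (Fin p ⊕ Fin p) (Fin p ⊕ Fin p) ℂ :=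
  Matrix.fromBlocks (Matrix.diagonal d * cycleMatrix p ^ k) 0 0
    (Matrix.diagonal fun j : Fin p => xi p ^ ((j : ℕ) * k + a j * p))

/-- Membership in the set `𝒯` of tadpole matrices: `D` is unitary diagonal of
determinant one, `k ∈ {0, …, p-1}`, `a_j ∈ {0, …, p-1}` and `a_0 = 0` (so the first
tail entry is `1`). -/
def IsTadpole (p : ℕ) (A : Matrix (Fin p ⊕ Fin p) (Fin p ⊕ Fin p) ℂ) : Prop :=
  ∃ (d : Fin p → ℂ) (k : ℕ) (a : Fin p → ℕ),
    (∀ i, ‖d i‖ = 1) ∧ (∏ i, d i = 1) ∧ k < p ∧ (∀ j, a j < p) ∧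
    (∀ j : Fin p, (j : ℕ) = 0 → a j = 0) ∧ A = tadpole p d k a

section Aux

variable {p : ℕ}

lemma cycle_pow_apply (hp : 0 < p) (k : ℕ) (i j : Fin p) :
    (cycleMatrix p ^ k) i j = if (j : ℕ) = ((i : ℕ) + k) % p then 1 else 0 := by
  induction k generalizing j with
  | zero =>
    simp [Matrix.one_apply, Nat.mod_eq_of_lt i.isLt, Fin.ext_iff, eq_comm]
  | succ n ih =>
    rw [pow_succ, Matrix.mul_apply]
    simp_rw [ih]
    have hc : ∀ m : Fin p, ((m : ℕ) = ((i : ℕ) + n) % p) ↔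
        (m = (⟨((i:ℕ)+n) % p, Nat.mod_lt _ hp⟩ : Fin p)) := by
      intro m; rw [Fin.ext_iff]
    simp_rw [hc, ite_mul, one_mul, zero_mul, Finset.sum_ite_eq' Finset.univ, Finset.mem_univ,
      if_true]
    show (if (j : ℕ) = (((i:ℕ)+n) % p + 1) % p then (1:ℂ) else 0) = _
    rw [Nat.mod_add_mod, ← Nat.add_assoc]

lemma cycle_pow_mod (hp : 0 < p) (m : ℕ) :
    cycleMatrix p ^ m = cycleMatrix p ^ (m % p) := by
  ext i j
  rw [cycle_pow_apply hp, cycle_pow_apply hp, Nat.add_mod_mod]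

lemma cycle_pow_mul_diag (hp : 0 < p) (k : ℕ) (e : Fin p → ℂ) :
    cycleMatrix p ^ k * Matrix.diagonal e =
      Matrix.diagonal (fun i : Fin p => e ⟨((i:ℕ)+k) % p, Nat.mod_lt _ hp⟩) *
        cycleMatrix p ^ k := by
  ext i j
  rw [Matrix.mul_diagonal, Matrix.diagonal_mul, cycle_pow_apply hp]
  by_cases h : (j:ℕ) = ((i:ℕ)+k) % p
  · have hj : j = (⟨((i:ℕ)+k)%p, Nat.mod_lt _ hp⟩ : Fin p) := Fin.ext h
    rw [if_pos h, hj]; ring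
  · rw [if_neg h]; ring

lemma xi_pow_p_sq (hp : 0 < p) : xi p ^ (p ^ 2) = 1 := by
  rw [xi, ← Complex.exp_nat_mul]
  have hne : ((p:ℂ)) ≠ 0 := Nat.cast_ne_zero.mpr hp.ne'
  rw [show ((p^2 : ℕ) : ℂ) * (2 * Real.pi * Complex.I / ((p:ℂ) ^ 2)) =
      2 * Real.pi * Complex.I by push_cast; field_simp]
  exact Complex.exp_two_pi_mul_I

lemma tadpole_mul (hp : 0 < p) (d e : Fin p → ℂ) (k l : ℕ) (a b : Fin p → ℕ) :
    tadpole p d k a * tadpole p e l b =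
      tadpole p (fun i : Fin p => d i * e ⟨((i:ℕ)+k) % p, Nat.mod_lt _ hp⟩) ((k+l) % p)
        (fun j : Fin p => ((j:ℕ) * ((k+l)/p) + a j + b j) % p) := by
  unfold tadpole
  rw [Matrix.fromBlocks_multiply]
  simp only [Matrix.mul_zero, Matrix.zero_mul, add_zero, zero_add]
  have hhead : Matrix.diagonal d * cycleMatrix p ^ k *
      (Matrix.diagonal e * cycleMatrix p ^ l) =
      Matrix.diagonal (fun i : Fin p => d i * e ⟨((i:ℕ)+k) % p, Nat.mod_lt _ hp⟩) *
        cycleMatrix p ^ ((k+l) % p) := by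
    rw [mul_assoc, ← mul_assoc (cycleMatrix p ^ k), cycle_pow_mul_diag hp,
        mul_assoc _ (cycleMatrix p ^ k), ← pow_add, ← mul_assoc,
        Matrix.diagonal_mul_diagonal, ← cycle_pow_mod hp]
  have htail : (Matrix.diagonal fun j : Fin p => xi p ^ ((j:ℕ)*k + a j * p)) *
      (Matrix.diagonal fun j : Fin p => xi p ^ ((j:ℕ)*l + b j * p)) =
      Matrix.diagonal fun j : Fin p =>
        xi p ^ ((j:ℕ)*((k+l) % p) + (((j:ℕ)*((k+l)/p) + a j + b j) % p) * p) := by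
    rw [Matrix.diagonal_mul_diagonal]
    refine congrArg Matrix.diagonal (funext fun j => ?_)
    show xi p ^ ((j:ℕ)*k + a j * p) * xi p ^ ((j:ℕ)*l + b j * p) = _
    set q := (k+l)/p with hq
    set k' := (k+l)%p with hk'
    set s := ((j:ℕ)*q + a j + b j) / p with hs
    set a' := ((j:ℕ)*q + a j + b j) % p with ha'
    have h1 : p * q + k' = k + l := Nat.div_add_mod _ _
    have h2 : p * s + a' = (j:ℕ)*q + a j + b j := Nat.div_add_mod _ _
    have key : (j:ℕ)*k + a j * p + ((j:ℕ)*l + b j * p) = (j:ℕ)*k' + a' * p + s * p^2 := by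
      calc (j:ℕ)*k + a j * p + ((j:ℕ)*l + b j * p)
          = (j:ℕ)*(k+l) + (a j + b j)*p := by ring
        _ = (j:ℕ)*(p*q + k') + (a j + b j)*p := by rw [h1]
        _ = (j:ℕ)*k' + ((j:ℕ)*q + a j + b j)*p := by ring
        _ = (j:ℕ)*k' + (p*s + a')*p := by rw [h2]
        _ = (j:ℕ)*k' + a'*p + s*p^2 := by ring
    rw [← pow_add, key, pow_add, mul_comm s, pow_mul, xi_pow_p_sq hp, one_pow, mul_one]
  rw [hhead, htail]

lemma tadpole_one : tadpole p (fun _ => 1) 0 (fun _ => 0) = 1 := by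
  unfold tadpole
  have h1 : (Matrix.diagonal (fun _ : Fin p => (1:ℂ))) * cycleMatrix p ^ 0 = 1 := by
    rw [pow_zero, mul_one, Matrix.diagonal_one]
  have h2 : (Matrix.diagonal fun j : Fin p => xi p ^ ((j:ℕ) * 0 + 0 * p)) = 1 := by
    have : (fun j : Fin p => xi p ^ ((j:ℕ) * 0 + 0 * p)) = fun _ : Fin p => (1:ℂ) := by
      funext j; simp
    rw [this, Matrix.diagonal_one]
  rw [h1, h2, Matrix.fromBlocks_one]

lemma mk_add_eq (hp : 0 < p) (i : Fin p) (k : ℕ) (hk : k < p) :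
    (⟨((i:ℕ)+k) % p, Nat.mod_lt _ hp⟩ : Fin p) = i + ⟨k, hk⟩ := by
  apply Fin.ext
  simp [Fin.val_add]

lemma aux_mod (hp : 0 < p) (x : ℕ) : (x + (p - x % p) % p) % p = 0 := by
  have h : x % p < p := Nat.mod_lt _ hp
  rcases Nat.eq_zero_or_pos (x % p) with h0 | h0
  · rw [h0, Nat.sub_zero, Nat.mod_self, Nat.add_zero, h0]
  · have hy : (p - x % p) % p = p - x % p := Nat.mod_eq_of_lt (by omega)
    rw [hy]
    set r := x % p with hr
    set m := x / p with hm
    have hdm : p * m + r = x := Nat.div_add_mod x p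
    have hx : x + (p - r) = p * (m + 1) := by
      rw [Nat.mul_add, Nat.mul_one, ← hdm, Nat.add_assoc,
        Nat.add_sub_cancel' (Nat.le_of_lt h)]
    rw [hx, Nat.mul_mod_right]

end Aux

/-- The set `𝒯` of tadpole matrices is closed under multiplication; in fact it is a
group under matrix multiplication (it contains the identity and is closed under
taking inverses). -/
theorem tadpole_mul_closed_and_group (p : ℕ) (hp : p.Prime) (hodd : Odd p) :
    (IsTadpole p 1) ∧
      (∀ A B, IsTadpole p A → IsTadpole p B → IsTadpole p (A * B)) ∧
      (∀ A, IsTadpole p A → ∃ B, IsTadpole p B ∧ A * B = 1 ∧ B * A = 1) := by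
  have hp0 : 0 < p := hp.pos
  haveI : NeZero p := ⟨hp0.ne'⟩
  have hone : IsTadpole p 1 :=
    ⟨fun _ => 1, 0, fun _ => 0, fun _ => by simp, by simp, hp0, fun _ => hp0,
      fun _ _ => rfl, tadpole_one.symm⟩
  have hmul : ∀ A B, IsTadpole p A → IsTadpole p B → IsTadpole p (A * B) := by
    rintro _ _ ⟨d, k, a, hd1, hd2, hk, ha1, ha0, rfl⟩ ⟨e, l, b, he1, he2, hl, hb1, hb0, rfl⟩
    refine ⟨fun i : Fin p => d i * e ⟨((i:ℕ)+k) % p, Nat.mod_lt _ hp0⟩, (k+l) % p,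
      fun j : Fin p => ((j:ℕ) * ((k+l)/p) + a j + b j) % p, ?_, ?_, Nat.mod_lt _ hp0,
      fun _ => Nat.mod_lt _ hp0, ?_, (tadpole_mul hp0 d e k l a b)⟩
    · intro i; simp only [norm_mul, hd1, he1, mul_one]
    · have : ∀ i : Fin p, d i * e ⟨((i:ℕ)+k) % p, Nat.mod_lt _ hp0⟩ =
          d i * e (i + ⟨k, hk⟩) := fun i => by rw [mk_add_eq hp0 i k hk]
      simp_rw [this]
      rw [Finset.prod_mul_distrib, hd2, one_mul]
      have hcp := Equiv.prod_comp (Equiv.addRight (⟨k, hk⟩ : Fin p)) e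
      simp only [Equiv.coe_addRight] at hcp
      rw [hcp, he2]
    · intro j hj
      show ((j:ℕ) * ((k+l)/p) + a j + b j) % p = 0
      rw [hj, ha0 j hj, hb0 j hj]
      simp
  refine ⟨hone, hmul, ?_⟩
  rintro _ ⟨d, k, a, hd1, hd2, hk, ha1, ha0, rfl⟩
  set l := (p - k) % p with hl
  have hlp : l < p := Nat.mod_lt _ hp0
  have hkl : (k + l) % p = 0 := by
    rcases Nat.eq_zero_or_pos k with h0 | h0
    · rw [hl, h0, Nat.sub_zero, Nat.mod_self, Nat.add_zero, Nat.zero_mod]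
    · have h1 : l = p - k := by rw [hl]; exact Nat.mod_eq_of_lt (by omega)
      rw [h1, show k + (p - k) = p by omega, Nat.mod_self]
  set q := (k + l) / p with hq
  set e : Fin p → ℂ := fun m => (d (m + ⟨l, hlp⟩))⁻¹ with he
  set b : Fin p → ℕ := fun j => (p - ((j:ℕ) * q + a j) % p) % p with hb
  have hd0 : ∀ i, d i ≠ 0 := by
    intro i h
    have := hd1 i
    rw [h] at this; simp at this
  have hAB : tadpole p d k a * tadpole p e l b = 1 := by
    rw [tadpole_mul hp0 d e k l a b]
    have hd' : (fun i : Fin p => d i * e ⟨((i:ℕ)+k) % p, Nat.mod_lt _ hp0⟩) =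
        fun _ : Fin p => (1:ℂ) := by
      funext i
      rw [mk_add_eq hp0 i k hk]
      have harg : i + ⟨k, hk⟩ + ⟨l, hlp⟩ = i := by
        rw [add_assoc]
        have h0 : (⟨k, hk⟩ : Fin p) + ⟨l, hlp⟩ = 0 := by
          apply Fin.ext
          simp [Fin.val_add, hkl]
        rw [h0, add_zero]
      simp only [he]
      rw [harg, mul_inv_cancel₀ (hd0 i)]
    have ha' : (fun j : Fin p => ((j:ℕ) * ((k+l)/p) + a j + b j) % p) =
        fun _ : Fin p => 0 := by
      funext j
      simp only [hb, ← hq]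
      exact aux_mod hp0 ((j:ℕ) * q + a j)
    rw [hd', ha', hkl, tadpole_one]
  refine ⟨tadpole p e l b, ⟨e, l, b, ?_, ?_, hlp, fun _ => Nat.mod_lt _ hp0, ?_, rfl⟩,
    hAB, mul_eq_one_comm.mp hAB⟩
  · intro m; simp only [he, norm_inv, hd1, inv_one]
  · simp only [he]
    have hcp := Equiv.prod_comp (Equiv.addRight (⟨l, hlp⟩ : Fin p)) (fun m => (d m)⁻¹)
    simp only [Equiv.coe_addRight] at hcp
    rw [hcp, Finset.prod_inv_distrib, hd2, inv_one]
  · intro j hj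
    simp only [hb]
    rw [hj, ha0 j hj]
    simp
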